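/- arXiv:1701.01549 — 5 statements merged into one kernel-verified Lean document; each statement's English description precedes it below -/
import Mathlib

section
/- Let W(x) be an s×t matrix with complex polynomial entries, s ≥ t. If W(u) has rank t for every u ∈ ℂⁿ, then there exists a t×s matrix P(x) with complex polynomial entries such that P(x)W(x) = I_t. -/
open MvPolynomial

/-- A matrix over `ℂ` with full column rank has an invertible `t × t` row-submatrix. -/
lemma exists_det_submatrix_ne_zero {s t : ℕ} (A : Matrix (Fin s) (Fin t) ℂ)
    (h : A.rank = t) : ∃ σ : Fin t → Fin s, (A.submatrix σ id).det ≠ 0 := by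
  classical
  have hspan : Submodule.span ℂ (Set.range A) = ⊤ := by
    have hr := A.rank_eq_finrank_span_row
    rw [h] at hr
    apply Submodule.eq_top_of_finrank_eq
    change Module.finrank ℂ (Submodule.span ℂ (Set.range A.row)) = _
    rw [← hr]
    simp [Module.finrank_pi]
  obtain ⟨b, hb_sub, hb_span, hb_li⟩ := exists_linearIndependent ℂ (Set.range A)
  rw [hspan] at hb_span
  haveI : Fintype b := (hb_li.setFinite).fintype
  have hcard : Fintype.card b = t := by
    have := Module.finrank_eq_card_basis (Module.Basis.mk hb_li (by rw [Subtype.range_val]; exact hb_span.ge))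
    simpa [Module.finrank_pi] using this.symm
  let e : Fin t ≃ b := (Fintype.equivFinOfCardEq hcard).symm
  have hpre : ∀ i : Fin t, ∃ j : Fin s, A j = (e i : Fin t → ℂ) := fun i =>
    hb_sub (e i).2
  choose σ hσ using hpre
  refine ⟨σ, ?_⟩
  have hli : LinearIndependent ℂ (fun i : Fin t => A (σ i)) := by
    have : (fun i : Fin t => A (σ i)) = (fun x : b => (x : Fin t → ℂ)) ∘ e := by
      funext i; simp [hσ i]
    rw [this]
    exact hb_li.comp e e.injective
  have hunit : IsUnit (A.submatrix σ id) := by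
    rw [← Matrix.linearIndependent_rows_iff_isUnit]
    convert hli using 1 <;> rfl
  have := hunit.map (Matrix.detMonoidHom (n := Fin t) (R := ℂ))
  simpa using this.ne_zero

/-- If `W(x) ∈ ℂ[x]^{s×t}` (`s ≥ t`) has full column rank `t` at every point
`u ∈ ℂⁿ`, then there is a matrix polynomial `P(x)` with `P(x)W(x) = I_t`. -/
theorem stmt5 (n s t : ℕ) (hst : t ≤ s)
    (W : Matrix (Fin s) (Fin t) (MvPolynomial (Fin n) ℂ))
    (hrk : ∀ u : Fin n → ℂ, (W.map (eval u)).rank = t) :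
    ∃ P : Matrix (Fin t) (Fin s) (MvPolynomial (Fin n) ℂ), P * W = 1 := by
  classical
  set g : (Fin t → Fin s) → MvPolynomial (Fin n) ℂ :=
    fun σ => (W.submatrix σ id).det with hg
  -- at every point, some minor is nonzero
  have key : ∀ u : Fin n → ℂ, ∃ σ, eval u (g σ) ≠ 0 := by
    intro u
    obtain ⟨σ, hσ⟩ := exists_det_submatrix_ne_zero (W.map (eval u)) (hrk u)
    refine ⟨σ, ?_⟩
    have : eval u (g σ) = ((W.map (eval u)).submatrix σ id).det := by
      rw [hg]
      simp only [RingHom.map_det, RingHom.mapMatrix_apply, Matrix.submatrix_map]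
    rw [this]
    exact hσ
  -- Nullstellensatz: 1 is in the ideal generated by the minors
  have h1 : (1 : MvPolynomial (Fin n) ℂ) ∈ Ideal.span (Set.range g) := by
    by_contra hmem
    have hne : Ideal.span (Set.range g) ≠ ⊤ := fun h => hmem (h ▸ Submodule.mem_top)
    have hrad : (Ideal.span (Set.range g)).radical ≠ ⊤ :=
      fun h => hne (Ideal.radical_eq_top.mp h)
    rw [← MvPolynomial.vanishingIdeal_zeroLocus_eq_radical (K := ℂ)] at hrad
    have hz : (MvPolynomial.zeroLocus ℂ (Ideal.span (Set.range g))).Nonempty := by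
      by_contra hempty
      rw [Set.not_nonempty_iff_eq_empty] at hempty
      rw [hempty, MvPolynomial.vanishingIdeal_empty] at hrad
      exact hrad rfl
    obtain ⟨u, hu⟩ := hz
    obtain ⟨σ, hσ⟩ := key u
    exact hσ (hu (g σ) (Ideal.subset_span ⟨σ, rfl⟩))
  rw [Ideal.mem_span_range_iff_exists_fun] at h1
  obtain ⟨c, hc⟩ := h1
  -- build the left inverse
  refine ⟨∑ σ : Fin t → Fin s,
    c σ • ((W.submatrix σ id).adjugate *
      (1 : Matrix (Fin s) (Fin s) (MvPolynomial (Fin n) ℂ)).submatrix σ id), ?_⟩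
  have hsel : ∀ σ : Fin t → Fin s,
      (1 : Matrix (Fin s) (Fin s) (MvPolynomial (Fin n) ℂ)).submatrix σ id * W = W.submatrix σ id := by
    intro σ
    ext i k
    simp [Matrix.mul_apply, Matrix.one_apply]
  rw [Matrix.sum_mul]
  have : ∀ σ : Fin t → Fin s,
      (c σ • ((W.submatrix σ id).adjugate *
        (1 : Matrix (Fin s) (Fin s) (MvPolynomial (Fin n) ℂ)).submatrix σ id)) * W
      = (c σ * g σ) • (1 : Matrix (Fin t) (Fin t) (MvPolynomial (Fin n) ℂ)) := by
    intro σ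
    rw [Matrix.smul_mul, Matrix.mul_assoc, hsel σ, Matrix.adjugate_mul, hg,
      smul_smul]
  simp_rw [this]
  rw [← Finset.sum_smul]
  have : ∑ σ : Fin t → Fin s, c σ * g σ = 1 := by
    rw [← hc]
  rw [this, one_smul]
end

section
/- Consider the constraints cᵢ(x) = xᵢ ≥ 0 (i = 1,...,n) and c_{n+1}(x) = x₁² + ... + xₙ² - 1 = 0 on ℝⁿ (nonnegative portion of the unit sphere). Let C(x) be the (2n+1)×(n+1) matrix whose columns are (∇cᵢ(x); cᵢ(x)e_i) for i = 1,...,n+1, i.e., C(x) = [[Iₙ, 2x], [diag(x), 0], [0, x ᵀx - 1]] appropriately arranged. Then the matrix polynomial L(x) = [[Iₙ - xxᵀ, x·𝟙ₙᵀ, 2x], [½xᵀ, -½𝟙ₙᵀ, -1]] satisfies L(x)C(x) = I_{n+1}. -/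
open MvPolynomial

/-- For the nonnegative portion of the unit sphere, with constraints
`cᵢ = xᵢ ≥ 0` (`i = 1,…,n`) and `c_{n+1} = x₁² + ⋯ + xₙ² - 1 = 0`, the matrix
polynomial `L(x) = [[Iₙ - xxᵀ, x𝟙ᵀ, 2x], [½xᵀ, -½𝟙ᵀ, -1]]` satisfies
`L(x) C(x) = I_{n+1}`, where `C(x)` has top block `[Iₙ, 2x]` (the gradients)
and bottom block `diag(x₁,…,xₙ, ∑xᵢ² - 1)`. -/
theorem stmt9 (n : ℕ)
    (L : Matrix (Fin n ⊕ Unit) (Fin n ⊕ (Fin n ⊕ Unit)) (MvPolynomial (Fin n) ℝ))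
    (hL : L = Matrix.of fun i p =>
      match i, p with
      | Sum.inl i, Sum.inl j => (if i = j then 1 else 0) - X i * X j
      | Sum.inl i, Sum.inr (Sum.inl _) => X i
      | Sum.inl i, Sum.inr (Sum.inr _) => 2 * X i
      | Sum.inr _, Sum.inl j => MvPolynomial.C (1/2 : ℝ) * X j
      | Sum.inr _, Sum.inr (Sum.inl _) => -MvPolynomial.C (1/2 : ℝ)
      | Sum.inr _, Sum.inr (Sum.inr _) => -1)
    (Cm : Matrix (Fin n ⊕ (Fin n ⊕ Unit)) (Fin n ⊕ Unit) (MvPolynomial (Fin n) ℝ))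
    (hCm : Cm = Matrix.of fun p k =>
      match p, k with
      | Sum.inl j, Sum.inl i => if j = i then 1 else 0
      | Sum.inl j, Sum.inr _ => 2 * X j
      | Sum.inr (Sum.inl j), Sum.inl i => if j = i then X j else 0
      | Sum.inr (Sum.inl _), Sum.inr _ => 0
      | Sum.inr (Sum.inr _), Sum.inl _ => 0
      | Sum.inr (Sum.inr _), Sum.inr _ => (∑ j, X j ^ 2) - 1) :
    L * Cm = 1 := by
  subst hL hCm
  ext i k : 2
  cases i with
  | inl i =>
    cases k with
    | inl k =>
      simp [Matrix.mul_apply, Fintype.sum_sum_type, Matrix.one_apply, sub_mul,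
        Finset.sum_sub_distrib, Finset.sum_ite_eq, Finset.sum_ite_eq',
        mul_comm, mul_assoc, mul_left_comm]
    | inr k =>
      simp [Matrix.mul_apply, Fintype.sum_sum_type, Matrix.one_apply, sub_mul, mul_sub,
        Finset.sum_sub_distrib, Finset.mul_sum, Finset.sum_ite_eq, Finset.sum_ite_eq']
      rw [Finset.sum_congr rfl (g := fun x => X i * X x * (2 * X x)) (fun x _ => by ring)]
      ring
  | inr i =>
    cases k with
    | inl k =>
      simp [Matrix.mul_apply, Fintype.sum_sum_type, Matrix.one_apply,
        Finset.sum_ite_eq, Finset.sum_ite_eq', mul_ite]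
    | inr k =>
      simp [Matrix.mul_apply, Fintype.sum_sum_type, Matrix.one_apply, mul_sub,
        Finset.mul_sum]
      rw [Finset.sum_congr rfl (g := fun x : Fin n => X x * X x)
        (fun x _ => by
          show MvPolynomial.C (2⁻¹:ℝ) * X x * (2 * X x) = X x * X x
          rw [show MvPolynomial.C (2⁻¹:ℝ) * X x * (2 * X x) = (MvPolynomial.C (2⁻¹:ℝ) * 2) * (X x * X x) by ring,
            show (MvPolynomial.C (2⁻¹:ℝ)) * 2 = 1 by
              rw [mul_two, ← map_add]; norm_num, one_mul])]
      ring
end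

section
/- Let A ∈ ℝ^{m×n} with rank A = n and m > n, bᵢ ∈ ℝ, cᵢ(x) = aᵢᵀx - bᵢ, and suppose Ax - b is nonsingular (for every u ∈ ℂⁿ the active gradients {aᵢ : cᵢ(u)=0} are linearly independent). Let V be the collection of subsets I ⊆ {1,...,m} with |I| = m - n such that the rows {aⱼ : j ∉ I} span ℝⁿ. Then there exist real scalars ν_I (I ∈ V) such that Σ_{I ∈ V} ν_I ∏_{i ∈ I} cᵢ(x) = 1 identically as polynomials in x. -/
open MvPolynomial Submodule

section helpers
variable {n m : ℕ} {A : Matrix (Fin m) (Fin n) ℝ} {b : Fin m → ℝ}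
  {c : Fin m → MvPolynomial (Fin n) ℝ}

lemma span_erase_top {S : Finset (Fin m)} {j : Fin m}
    (hspan : Submodule.span ℝ (A '' ↑S) = ⊤)
    (hmem : A j ∈ Submodule.span ℝ (A '' ↑(S.erase j))) :
    Submodule.span ℝ (A '' ↑(S.erase j)) = ⊤ := by
  rw [← top_le_iff, ← hspan, Submodule.span_le]
  rintro y ⟨i, hi, rfl⟩
  by_cases hij : i = j
  · subst hij; exact hmem
  · refine Submodule.subset_span ⟨i, ?_, rfl⟩
    simp only [Finset.coe_erase, Set.mem_diff, Set.mem_singleton_iff]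
    exact ⟨hi, hij⟩

lemma mem_span_of_coeff_ne {S : Finset (Fin m)} {μ : Fin m → ℝ}
    (h1 : ∑ j ∈ S, μ j • A j = 0) {j : Fin m} (hj : j ∈ S) (hμ : μ j ≠ 0) :
    A j ∈ Submodule.span ℝ (A '' ↑(S.erase j)) := by
  have hsum : μ j • A j + ∑ i ∈ S.erase j, μ i • A i = 0 :=
    (Finset.add_sum_erase S (fun i => μ i • A i) hj).trans h1
  have : A j = (μ j)⁻¹ • (-(∑ i ∈ S.erase j, μ i • A i)) := by
    rw [← eq_neg_of_add_eq_zero_left hsum, smul_smul, inv_mul_cancel₀ hμ, one_smul]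
  rw [this]
  exact Submodule.smul_mem _ _ (Submodule.neg_mem _ (Submodule.sum_mem _ fun i hi =>
    Submodule.smul_mem _ _ (Submodule.subset_span ⟨i, by
      simpa using (Finset.mem_coe.2 hi), rfl⟩)))

lemma exists_erase {S : Finset (Fin m)}
    (hspan : Submodule.span ℝ (A '' ↑S) = ⊤) (hcard : n < S.card) :
    ∃ k ∈ S, Submodule.span ℝ (A '' ↑(S.erase k)) = ⊤ := by
  by_contra h
  push_neg at h
  have hli : LinearIndependent ℝ (fun j : ↥S => A j.1) := by
    rw [linearIndependent_iff_notMem_span]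
    intro i hmem
    have himg : (fun j : ↥S => A j.1) '' (Set.univ \ {i}) = A '' ↑(S.erase i.1) := by
      ext y
      constructor
      · rintro ⟨j, ⟨-, hj⟩, rfl⟩
        exact ⟨j.1, by
          simp only [Finset.coe_erase, Set.mem_diff, Set.mem_singleton_iff, Finset.mem_coe]
          exact ⟨j.2, fun hh => hj (Subtype.ext hh)⟩, rfl⟩
      · rintro ⟨j, hj, rfl⟩
        rw [Finset.coe_erase, Set.mem_diff] at hj
        obtain ⟨hjS, hji⟩ := hj
        exact ⟨⟨j, hjS⟩, ⟨trivial, fun hh => hji (by simpa using congrArg Subtype.val hh)⟩, rfl⟩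
    rw [himg] at hmem
    exact h i.1 i.2 (span_erase_top hspan hmem)
  have hcard' := hli.fintype_card_le_finrank
  rw [Fintype.card_coe, Module.finrank_pi] at hcard'
  simp at hcard'
  omega


lemma base_combo
    (hns : ∀ u : Fin n → ℂ,
      LinearIndependent ℂ
        (fun i : {i : Fin m // ∑ j, (A i j : ℂ) * u j = (b i : ℂ)} =>
          fun j : Fin n => (A i.1 j : ℂ)))
    {S : Finset (Fin m)} (hcard : S.card = n + 1)
    (hspan : Submodule.span ℝ (A '' ↑S) = ⊤) :
    ∃ μ : Fin m → ℝ, (∑ j ∈ S, μ j • A j = 0) ∧ (∑ j ∈ S, μ j * b j = -1) := by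
  classical
  set v : Fin m → (Fin n → ℝ) × ℝ := fun j => (A j, b j) with hv
  have hW : Submodule.span ℝ (v '' ↑S) = ⊤ := by
    by_contra hW
    set W := Submodule.span ℝ (v '' ↑S) with hWdef
    -- the projection to the first factor, restricted to W
    set g : W →ₗ[ℝ] (Fin n → ℝ) := (LinearMap.fst ℝ (Fin n → ℝ) ℝ).comp W.subtype with hg
    have hrange : LinearMap.range g = ⊤ := by
      rw [hg, LinearMap.range_comp, Submodule.range_subtype, hWdef,
        Submodule.map_span, ← Set.image_comp]
      have : (⇑(LinearMap.fst ℝ (Fin n → ℝ) ℝ) ∘ v) = fun j => A j := rfl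
      rw [this]
      exact hspan
    have hsurj : Function.Surjective g := LinearMap.range_eq_top.mp hrange
    have hfr1 : Module.finrank ℝ W < n + 1 := by
      have := Submodule.finrank_lt (K := ℝ) (V := (Fin n → ℝ) × ℝ) hW
      simpa [Module.finrank_prod, Module.finrank_pi] using this
    have hfr2 : n ≤ Module.finrank ℝ W := by
      have h := LinearMap.finrank_range_le g
      rw [hrange] at h
      simpa [Module.finrank_pi, finrank_top] using h
    have hfr : Module.finrank ℝ W = Module.finrank ℝ (Fin n → ℝ) := by
      rw [Module.finrank_pi]; simp; omega
    have hinj : Function.Injective g :=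
      (LinearMap.injective_iff_surjective_of_finrank_eq_finrank hfr).2 hsurj
    set e := LinearEquiv.ofBijective g ⟨hinj, hsurj⟩ with he
    set f : (Fin n → ℝ) →ₗ[ℝ] ℝ :=
      ((LinearMap.snd ℝ (Fin n → ℝ) ℝ).comp W.subtype).comp e.symm.toLinearMap with hf
    have hkey : ∀ j ∈ S, f (A j) = b j := by
      intro j hj
      have hvj : v j ∈ W := Submodule.subset_span ⟨j, hj, rfl⟩
      have hgw : e ⟨v j, hvj⟩ = A j := rfl
      have : e.symm (A j) = ⟨v j, hvj⟩ := by rw [← hgw, LinearEquiv.symm_apply_apply]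
      simp [hf, this, hv]
    set x : Fin n → ℝ := fun k => f (Pi.single k 1) with hx
    have hb : ∀ j ∈ S, ∑ k, A j k * x k = b j := by
      intro j hj
      have hAj : A j = ∑ k, (A j k) • (Pi.single k (1 : ℝ) : Fin n → ℝ) := by
        ext k'
        simp [Pi.single_apply, Finset.sum_ite_eq']
      calc ∑ k, A j k * x k = f (∑ k, (A j k) • (Pi.single k (1:ℝ) : Fin n → ℝ)) := by
            rw [map_sum]
            exact Finset.sum_congr rfl fun k _ => by rw [map_smul]; rfl
        _ = f (A j) := by rw [← hAj]
        _ = b j := hkey j hj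
    -- contradiction with nonsingularity at the complex point x
    set u : Fin n → ℂ := fun k => ((x k : ℝ) : ℂ) with hu
    have hax : ∀ j ∈ S, ∑ k, (A j k : ℂ) * u k = (b j : ℂ) := by
      intro j hj
      rw [hu]
      push_cast [← hb j hj]
      norm_num
    set emb : ↥S → {i : Fin m // ∑ k, (A i k : ℂ) * u k = (b i : ℂ)} :=
      fun j => ⟨j.1, hax j.1 j.2⟩ with hemb
    have hembinj : Function.Injective emb := by
      intro a b hab
      exact Subtype.ext (by simpa [hemb] using congrArg Subtype.val hab)
    have hli := (hns u).comp emb hembinj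
    have hcard' := hli.fintype_card_le_finrank
    rw [Fintype.card_coe, Module.finrank_pi] at hcard'
    simp at hcard'
    omega
  -- extract the coefficients
  have hmem : ((0 : Fin n → ℝ), (-1 : ℝ)) ∈ Submodule.span ℝ (v '' ↑S) := hW ▸ trivial
  obtain ⟨l, hls, hlc⟩ := (Finsupp.mem_span_image_iff_linearCombination ℝ).1 hmem
  have hsub : l.support ⊆ S := fun x hx =>
    Finset.mem_coe.1 ((Finsupp.mem_supported ℝ l).1 hls (Finset.mem_coe.2 hx))
  have hcoe : ∑ a ∈ l.support, l a • v a = ∑ j ∈ S, l j • v j :=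
    Finset.sum_subset hsub (fun i _ hi => by
      rw [Finsupp.notMem_support_iff.1 hi, zero_smul])
  rw [Finsupp.linearCombination_apply, Finsupp.sum, hcoe] at hlc
  refine ⟨l, ?_, ?_⟩
  · have h := congrArg Prod.fst hlc
    simpa [Prod.fst_sum] using h
  · have h := congrArg Prod.snd hlc
    simpa [Prod.snd_sum, smul_eq_mul] using h


lemma combo_poly
    (hc : ∀ i, c i = (∑ j, MvPolynomial.C (A i j) * X j) - MvPolynomial.C (b i))
    {S : Finset (Fin m)} {μ : Fin m → ℝ}
    (h1 : ∑ j ∈ S, μ j • A j = 0) (h2 : ∑ j ∈ S, μ j * b j = -1) :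
    ∑ j ∈ S, MvPolynomial.C (μ j) * c j = 1 := by
  have hterm : ∀ j, MvPolynomial.C (μ j) * c j
      = (∑ k, MvPolynomial.C (μ j * A j k) * X k) - MvPolynomial.C (μ j * b j) := by
    intro j
    rw [hc j, mul_sub, Finset.mul_sum, ← map_mul]
    congr 1
    exact Finset.sum_congr rfl fun k _ => by rw [← mul_assoc, ← map_mul]
  rw [Finset.sum_congr rfl fun j _ => hterm j, Finset.sum_sub_distrib, Finset.sum_comm]
  have hk : ∀ k, (∑ j ∈ S, μ j * A j k) = 0 := by
    intro k
    have := congrFun h1 k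
    simpa using this
  have hzero : ∀ k ∈ Finset.univ, ∑ j ∈ S, MvPolynomial.C (μ j * A j k) * X k
      = (0 : MvPolynomial (Fin n) ℝ) := by
    intro k _
    rw [← Finset.sum_mul, ← map_sum, hk k, map_zero, zero_mul]
  rw [Finset.sum_congr rfl hzero, ← map_sum, h2]
  simp


lemma main_span
    (hns : ∀ u : Fin n → ℂ,
      LinearIndependent ℂ
        (fun i : {i : Fin m // ∑ j, (A i j : ℂ) * u j = (b i : ℂ)} =>
          fun j : Fin n => (A i.1 j : ℂ)))
    (hc : ∀ i, c i = (∑ j, MvPolynomial.C (A i j) * X j) - MvPolynomial.C (b i)) :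
    ∀ s : ℕ, ∀ S : Finset (Fin m), S.card = n + 1 + s →
    Submodule.span ℝ (A '' ↑S) = ⊤ →
    (1 : MvPolynomial (Fin n) ℝ) ∈ Submodule.span ℝ
      ((fun I => ∏ i ∈ I, c i) ''
        {I : Finset (Fin m) | I ⊆ S ∧ I.card + n = S.card ∧
          Submodule.span ℝ (A '' ↑(S \ I)) = ⊤}) := by
  intro s
  induction s with
  | zero =>
    intro S hcard hspan
    obtain ⟨μ, h1, h2⟩ := base_combo hns (by omega) hspan
    have hpoly := combo_poly hc h1 h2
    rw [← hpoly]
    refine Submodule.sum_mem _ fun j hj => ?_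
    by_cases hμ : μ j = 0
    · simp [hμ]
    · have hAj := mem_span_of_coeff_ne h1 hj hμ
      have hErase : Submodule.span ℝ (A '' ↑(S.erase j)) = ⊤ := span_erase_top hspan hAj
      have hgen : (∏ i ∈ ({j} : Finset (Fin m)), c i) ∈ Submodule.span ℝ
          ((fun I => ∏ i ∈ I, c i) ''
            {I : Finset (Fin m) | I ⊆ S ∧ I.card + n = S.card ∧
              Submodule.span ℝ (A '' ↑(S \ I)) = ⊤}) := by
        refine Submodule.subset_span ⟨{j}, ⟨Finset.singleton_subset_iff.2 hj, by simp; omega,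
          ?_⟩, rfl⟩
        rwa [Finset.sdiff_singleton_eq_erase]
      have heq : MvPolynomial.C (μ j) * c j = μ j • (∏ i ∈ ({j} : Finset (Fin m)), c i) := by
        rw [Finset.prod_singleton, smul_eq_C_mul]
      rw [heq]
      exact Submodule.smul_mem _ _ hgen
  | succ s ih =>
    intro S hcard hspan
    obtain ⟨k, hk, hspan'⟩ := exists_erase hspan (by omega)
    have hcard' : (S.erase k).card = n + 1 + s := by
      rw [Finset.card_erase_of_mem hk]; omega
    have h1 := ih (S.erase k) hcard' hspan'
    suffices hsub : ((fun I => ∏ i ∈ I, c i) ''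
        {I : Finset (Fin m) | I ⊆ S.erase k ∧ I.card + n = (S.erase k).card ∧
          Submodule.span ℝ (A '' ↑(S.erase k \ I)) = ⊤}) ⊆
        ↑(Submodule.span ℝ ((fun I => ∏ i ∈ I, c i) ''
          {I : Finset (Fin m) | I ⊆ S ∧ I.card + n = S.card ∧
            Submodule.span ℝ (A '' ↑(S \ I)) = ⊤})) by
      exact (Submodule.span_le.2 hsub) h1
    rintro p ⟨I, ⟨hIsub, hIcard, hIspan⟩, rfl⟩
    have hkI : k ∉ I := fun h => (Finset.notMem_erase k S) (hIsub h)
    have hIS : I ⊆ S := hIsub.trans (Finset.erase_subset _ _)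
    have hecard : (S.erase k).card = S.card - 1 := Finset.card_erase_of_mem hk
    have hTcard : (S \ I).card = n + 1 := by
      rw [Finset.card_sdiff_of_subset hIS]; omega
    have hTspan : Submodule.span ℝ (A '' ↑(S \ I)) = ⊤ := by
      rw [← top_le_iff, ← hIspan]
      exact Submodule.span_mono (Set.image_mono (by
        intro x hx
        simp only [Finset.coe_sdiff, Set.mem_diff, Finset.mem_coe] at hx ⊢
        exact ⟨Finset.erase_subset _ _ hx.1, hx.2⟩))
    obtain ⟨μ, h1', h2'⟩ := base_combo hns hTcard hTspan
    have hpoly := combo_poly hc h1' h2'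
    have key : (∏ i ∈ I, c i) = ∑ j ∈ S \ I, MvPolynomial.C (μ j) * ∏ i ∈ insert j I, c i := by
      calc ∏ i ∈ I, c i = (∑ j ∈ S \ I, MvPolynomial.C (μ j) * c j) * ∏ i ∈ I, c i := by
            rw [hpoly, one_mul]
        _ = ∑ j ∈ S \ I, MvPolynomial.C (μ j) * ∏ i ∈ insert j I, c i := by
            rw [Finset.sum_mul]
            refine Finset.sum_congr rfl fun j hj => ?_
            have hjI : j ∉ I := (Finset.mem_sdiff.1 hj).2
            rw [Finset.prod_insert hjI, mul_assoc]
    show (∏ i ∈ I, c i) ∈ _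
    rw [key]
    refine Submodule.sum_mem _ fun j hj => ?_
    by_cases hμ : μ j = 0
    · simp [hμ]
    · have hAj := mem_span_of_coeff_ne h1' hj hμ
      have hErase : Submodule.span ℝ (A '' ↑((S \ I).erase j)) = ⊤ := span_erase_top hTspan hAj
      obtain ⟨hjS, hjI⟩ := Finset.mem_sdiff.1 hj
      have hgen : (∏ i ∈ insert j I, c i) ∈ Submodule.span ℝ
          ((fun I => ∏ i ∈ I, c i) ''
            {I : Finset (Fin m) | I ⊆ S ∧ I.card + n = S.card ∧
              Submodule.span ℝ (A '' ↑(S \ I)) = ⊤}) := by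
        refine Submodule.subset_span ⟨insert j I, ⟨Finset.insert_subset hjS hIS, ?_, ?_⟩, rfl⟩
        · rw [Finset.card_insert_of_notMem hjI]; omega
        · rwa [Finset.sdiff_insert]
      have heq : MvPolynomial.C (μ j) * ∏ i ∈ insert j I, c i
          = μ j • (∏ i ∈ insert j I, c i) := (smul_eq_C_mul _ _).symm
      rw [heq]
      exact Submodule.smul_mem _ _ hgen

end helpers

/-- Partition-of-unity step in the polyhedral construction: if `rank A = n`,
`m > n`, and `Ax - b` is nonsingular (active rows are linearly independent at
every complex point), then there are real scalars `ν_I`, supported on the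
subsets `I ⊆ [m]` with `|I| = m - n` whose complementary rows span `ℝⁿ`, such
that `∑_I ν_I ∏_{i ∈ I} cᵢ(x) = 1` identically as polynomials. -/
theorem stmt11 (n m : ℕ) (hmn : n < m)
    (A : Matrix (Fin m) (Fin n) ℝ) (hA : A.rank = n) (b : Fin m → ℝ)
    (c : Fin m → MvPolynomial (Fin n) ℝ)
    (hc : ∀ i, c i = (∑ j, MvPolynomial.C (A i j) * X j) - MvPolynomial.C (b i))
    (hns : ∀ u : Fin n → ℂ,
      LinearIndependent ℂ
        (fun i : {i : Fin m // ∑ j, (A i j : ℂ) * u j = (b i : ℂ)} =>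
          fun j : Fin n => (A i.1 j : ℂ))) :
    ∃ ν : Finset (Fin m) → ℝ,
      (∀ I : Finset (Fin m),
        ¬(I.card = m - n ∧
          Submodule.span ℝ (Set.range fun j : {j : Fin m // j ∉ I} => A j.1) = ⊤) →
        ν I = 0) ∧
      ∑ I : Finset (Fin m), MvPolynomial.C (ν I) * ∏ i ∈ I, c i = 1 := by
  classical
  have hspan : Submodule.span ℝ (A '' ↑(Finset.univ : Finset (Fin m))) = ⊤ := by
    rw [Finset.coe_univ, show A '' Set.univ = Set.range (Matrix.row A) from Set.image_univ]
    apply Submodule.eq_top_of_finrank_eq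
    rw [← Matrix.rank_eq_finrank_span_row, hA, Module.finrank_pi]
    simp
  have hcardu : (Finset.univ : Finset (Fin m)).card = n + 1 + (m - n - 1) := by
    rw [Finset.card_univ, Fintype.card_fin]; omega
  have hmem := main_span hns hc (m - n - 1) Finset.univ hcardu hspan
  obtain ⟨l, hls, hlc⟩ := (Finsupp.mem_span_image_iff_linearCombination ℝ).1 hmem
  have hrange : ∀ I : Finset (Fin m),
      (Set.range fun j : {j : Fin m // j ∉ I} => A j.1) = A '' ↑((Finset.univ : Finset (Fin m)) \ I) := by
    intro I
    ext y
    constructor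
    · rintro ⟨⟨j, hj⟩, rfl⟩
      exact ⟨j, by simp [hj], rfl⟩
    · rintro ⟨j, hj, rfl⟩
      simp only [Finset.coe_sdiff, Finset.coe_univ, Set.mem_diff, Finset.mem_coe] at hj
      exact ⟨⟨j, hj.2⟩, rfl⟩
  refine ⟨⇑l, ?_, ?_⟩
  · intro I hI
    by_contra hne
    have hmemI := (Finsupp.mem_supported ℝ l).1 hls
      (Finset.mem_coe.2 (Finsupp.mem_support_iff.2 hne))
    obtain ⟨-, hcardI, hspanI⟩ := hmemI
    rw [Finset.card_univ, Fintype.card_fin] at hcardI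
    exact hI ⟨by omega, by rw [hrange I]; exact hspanI⟩
  · rw [Finsupp.linearCombination_apply, Finsupp.sum] at hlc
    rw [← hlc]
    rw [Finset.sum_subset (Finset.subset_univ l.support) (fun I _ hI => by
      rw [Finsupp.notMem_support_iff.1 hI, zero_smul])]
    exact Finset.sum_congr rfl fun I _ => (smul_eq_C_mul _ _).symm
end

section
/- Let c = (c₁,...,cₘ) be a tuple of real polynomials in x ∈ ℝⁿ, and let C(x) be the (n+m)×m matrix polynomial whose i-th column is (∇cᵢ(x); cᵢ(x)eᵢ) (gradient stacked over cᵢ(x) times the i-th unit vector in ℝᵐ). Suppose there exists L(x) ∈ ℝ[x]^{m×(n+m)} with L(x)C(x) = I_m, and let L₁(x) be the submatrix of the first n columns of L(x). Then for any polynomial f and any critical pair (u,λ) ∈ ℝⁿ × ℝᵐ satisfying ∇f(u) = Σᵢ λᵢ∇cᵢ(u) and λᵢcᵢ(u) = 0 for all i, it holds that λ = L₁(u)∇f(u). -/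
open MvPolynomial

/-- If `L(x) C(x) = Iₘ` where `C(x)` has columns `(∇cᵢ(x); cᵢ(x)eᵢ)`, then for
any polynomial `f` and any critical pair `(u, λ)` (stationarity and
complementarity), the Lagrange multipliers are `λ = L₁(u) ∇f(u)`, with `L₁`
the first `n` columns of `L`. -/
theorem stmt13 (n m : ℕ)
    (c : Fin m → MvPolynomial (Fin n) ℝ)
    (Cm : Matrix (Fin n ⊕ Fin m) (Fin m) (MvPolynomial (Fin n) ℝ))
    (hCm : Cm = Matrix.of fun p i =>
      match p with
      | Sum.inl j => pderiv j (c i)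
      | Sum.inr k => if k = i then c i else 0)
    (L : Matrix (Fin m) (Fin n ⊕ Fin m) (MvPolynomial (Fin n) ℝ))
    (hL : L * Cm = 1) :
    ∀ (f : MvPolynomial (Fin n) ℝ) (u : Fin n → ℝ) (lam : Fin m → ℝ),
      (∀ j : Fin n, eval u (pderiv j f) = ∑ i, lam i * eval u (pderiv j (c i))) →
      (∀ i, lam i * eval u (c i) = 0) →
      ∀ i, lam i = ∑ j : Fin n, eval u (L i (Sum.inl j)) * eval u (pderiv j f) := by
  intro f u lam hstat hcomp i
  have expand : ∀ k, (∑ j : Fin n, eval u (L i (Sum.inl j)) * eval u (pderiv j (c k)))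
      + eval u (L i (Sum.inr k)) * eval u (c k) = if i = k then 1 else 0 := by
    intro k
    have h : eval u ((L * Cm) i k) = if i = k then 1 else 0 := by
      rw [hL, Matrix.one_apply]
      split <;> simp
    rw [Matrix.mul_apply, Fintype.sum_sum_type, hCm] at h
    simpa [map_sum, apply_ite (eval u), mul_ite, Finset.sum_ite_eq] using h
  calc lam i = ∑ k, lam k * (if i = k then 1 else 0) := by simp
    _ = ∑ k, lam k * ((∑ j : Fin n, eval u (L i (Sum.inl j)) * eval u (pderiv j (c k)))
          + eval u (L i (Sum.inr k)) * eval u (c k)) := by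
        refine Finset.sum_congr rfl fun k _ => by rw [expand k]
    _ = ∑ k, ∑ j : Fin n, eval u (L i (Sum.inl j)) * (lam k * eval u (pderiv j (c k)))
          + ∑ k, eval u (L i (Sum.inr k)) * (lam k * eval u (c k)) := by
        rw [← Finset.sum_add_distrib]
        refine Finset.sum_congr rfl fun k _ => ?_
        rw [mul_add, Finset.mul_sum]
        refine congrArg₂ (· + ·) (Finset.sum_congr rfl fun j _ => by ring) (by ring)
    _ = ∑ j : Fin n, eval u (L i (Sum.inl j)) * eval u (pderiv j f) := by
        rw [Finset.sum_comm]
        simp only [hcomp, mul_zero, Finset.sum_const_zero, add_zero, ← Finset.mul_sum, hstat]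
end

section
/- Let I ⊆ ℝ[x] be an ideal with complex variety V_ℂ(I), let f ∈ ℝ[x], and suppose f vanishes identically on V_ℂ(I). Then for every ε > 0 there exists a polynomial σ_ε that is a square of a polynomial (σ_ε = s_ε² with s_ε ∈ ℝ[x]) such that f + ε - σ_ε ∈ I, and moreover the degree of s_ε is bounded independently of ε. -/
open MvPolynomial

noncomputable def rePoly {σ : Type*} (p : MvPolynomial σ ℂ) : MvPolynomial σ ℝ :=
  ∑ m ∈ p.support, monomial m (p.coeff m).re

lemma coeff_rePoly {σ : Type*} (p : MvPolynomial σ ℂ) (k : σ →₀ ℕ) :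
    coeff k (rePoly p) = (coeff k p).re := by
  classical
  rw [rePoly, MvPolynomial.coeff_sum]
  simp only [coeff_monomial]
  rw [Finset.sum_ite_eq' p.support k (fun m => (p.coeff m).re)]
  split_ifs with h
  · rfl
  · rw [MvPolynomial.notMem_support_iff.mp h, Complex.zero_re]

lemma rePoly_add {σ : Type*} (p q : MvPolynomial σ ℂ) :
    rePoly (p + q) = rePoly p + rePoly q := by
  ext k; simp [coeff_rePoly, coeff_add]

lemma rePoly_map_mul {σ : Type*} (g : MvPolynomial σ ℝ) (x : MvPolynomial σ ℂ) :
    rePoly (MvPolynomial.map (algebraMap ℝ ℂ) g * x) = g * rePoly x := by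
  classical
  ext k
  rw [coeff_rePoly, MvPolynomial.coeff_mul, MvPolynomial.coeff_mul, Complex.re_sum]
  refine Finset.sum_congr rfl fun ab _ => ?_
  rw [MvPolynomial.coeff_map, coeff_rePoly]
  exact Complex.re_ofReal_mul _ _

lemma rePoly_zero {σ : Type*} : rePoly (0 : MvPolynomial σ ℂ) = 0 := by
  ext k; simp [coeff_rePoly]

lemma rePoly_map {σ : Type*} (g : MvPolynomial σ ℝ) :
    rePoly (MvPolynomial.map (algebraMap ℝ ℂ) g) = g := by
  ext k; simp [coeff_rePoly, MvPolynomial.coeff_map]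

lemma rePoly_I_map {σ : Type*} (g : MvPolynomial σ ℝ) :
    rePoly (MvPolynomial.C Complex.I * MvPolynomial.map (algebraMap ℝ ℂ) g) = 0 := by
  ext k; simp [coeff_rePoly, MvPolynomial.coeff_C_mul, MvPolynomial.coeff_map]

lemma rePoly_decomp {σ : Type*} (p : MvPolynomial σ ℂ) :
    p = MvPolynomial.map (algebraMap ℝ ℂ) (rePoly p)
      + MvPolynomial.C Complex.I
        * MvPolynomial.map (algebraMap ℝ ℂ) (rePoly (MvPolynomial.C (-Complex.I) * p)) := by
  ext k
  simp only [coeff_add, MvPolynomial.coeff_map, coeff_rePoly, MvPolynomial.coeff_C_mul]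
  apply Complex.ext <;> simp [Complex.coe_algebraMap]

lemma rePoly_mem_of_mem_map {σ : Type*} (I : Ideal (MvPolynomial σ ℝ))
    (x : MvPolynomial σ ℂ)
    (hx : x ∈ Ideal.map (MvPolynomial.map (algebraMap ℝ ℂ) :
        MvPolynomial σ ℝ →+* MvPolynomial σ ℂ) I) :
    rePoly x ∈ I ∧ rePoly (MvPolynomial.C Complex.I * x) ∈ I := by
  rw [Ideal.map, Ideal.span] at hx
  refine Submodule.span_induction ?_ ?_ ?_ ?_ hx
  · rintro _ ⟨g, hg, rfl⟩
    refine ⟨by rw [rePoly_map]; exact hg, by rw [rePoly_I_map]; exact I.zero_mem⟩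
  · exact ⟨by rw [rePoly_zero]; exact I.zero_mem,
      by rw [mul_zero, rePoly_zero]; exact I.zero_mem⟩
  · intro a b _ _ ha hb
    exact ⟨by rw [rePoly_add]; exact I.add_mem ha.1 hb.1,
      by rw [mul_add, rePoly_add]; exact I.add_mem ha.2 hb.2⟩
  · intro p x _ hx
    have hdec := rePoly_decomp p
    set a := rePoly p
    set b := rePoly (MvPolynomial.C (-Complex.I) * p)
    have hpx : p * x = MvPolynomial.map (algebraMap ℝ ℂ) a * x
        + MvPolynomial.map (algebraMap ℝ ℂ) b * (MvPolynomial.C Complex.I * x) := by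
      nth_rewrite 1 [hdec]; ring
    have hIpx : MvPolynomial.C Complex.I * (p * x)
        = MvPolynomial.map (algebraMap ℝ ℂ) a * (MvPolynomial.C Complex.I * x)
          + MvPolynomial.map (algebraMap ℝ ℂ) (-b) * x := by
      nth_rewrite 1 [hdec]
      rw [map_neg (MvPolynomial.map (algebraMap ℝ ℂ))]
      have h2 : (MvPolynomial.C Complex.I : MvPolynomial σ ℂ) * MvPolynomial.C Complex.I
          = - 1 := by
        rw [← MvPolynomial.C_mul, Complex.I_mul_I, MvPolynomial.C_neg, MvPolynomial.C_1]
      linear_combination (MvPolynomial.map (algebraMap ℝ ℂ) b * x) * h2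
    constructor
    · show rePoly (p • x) ∈ I
      rw [smul_eq_mul, hpx, rePoly_add, rePoly_map_mul, rePoly_map_mul]
      exact I.add_mem (I.mul_mem_left a hx.1) (I.mul_mem_left b hx.2)
    · show rePoly (MvPolynomial.C Complex.I * (p • x)) ∈ I
      rw [smul_eq_mul, hIpx, rePoly_add, rePoly_map_mul, rePoly_map_mul]
      exact I.add_mem (I.mul_mem_left a hx.2) (I.mul_mem_left (-b) hx.1)

lemma sqrt_approx (m : ℕ) : ∀ ε : ℝ, 0 < ε → ∃ p q : Polynomial ℝ,
    p.natDegree ≤ m ∧ p ^ 2 = Polynomial.X + Polynomial.C ε + q * Polynomial.X ^ (m + 1) := by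
  induction m with
  | zero =>
    intro ε hε
    refine ⟨Polynomial.C (Real.sqrt ε), -1, by simp, ?_⟩
    rw [← Polynomial.C_pow, Real.sq_sqrt hε.le]
    ring
  | succ m ih =>
    intro ε hε
    obtain ⟨p, q, hdeg, hsq⟩ := ih ε hε
    have hp0 : p.eval 0 ≠ 0 := by
      intro h
      have := congrArg (Polynomial.eval 0) hsq
      simp [h, pow_succ] at this
      exact absurd this.symm hε.ne'
    set c : ℝ := -q.eval 0 / (2 * p.eval 0) with hc
    set r : Polynomial ℝ := q + Polynomial.C (2 * c) * p + Polynomial.C (c ^ 2) * Polynomial.X ^ (m + 1) with hr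
    have hr0 : r.eval 0 = 0 := by
      rw [hr]
      simp only [Polynomial.eval_add, Polynomial.eval_mul, Polynomial.eval_C, Polynomial.eval_pow, Polynomial.eval_X]
      rw [hc]
      field_simp
      ring
    obtain ⟨q', hq'⟩ := (Polynomial.X_dvd_iff.mpr (by rwa [← Polynomial.coeff_zero_eq_eval_zero] at hr0))
    refine ⟨p + Polynomial.C c * Polynomial.X ^ (m + 1), q', ?_, ?_⟩
    · refine (Polynomial.natDegree_add_le _ _).trans ?_
      simp only [max_le_iff]
      exact ⟨hdeg.trans (Nat.le_succ m),
        (Polynomial.natDegree_C_mul_le _ _).trans (by simp)⟩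
    · have : (p + Polynomial.C c * Polynomial.X ^ (m + 1)) ^ 2 = Polynomial.X + Polynomial.C ε + r * Polynomial.X ^ (m + 1) := by
        rw [hr]
        simp only [Polynomial.C_mul, Polynomial.C_pow, map_ofNat]
        linear_combination hsq
      rw [this, hq']
      ring

lemma totalDegree_aeval_le {σ : Type*} (p : Polynomial ℝ) (f : MvPolynomial σ ℝ) :
    (Polynomial.aeval f p).totalDegree ≤ p.natDegree * f.totalDegree := by
  rw [Polynomial.aeval_eq_sum_range]
  refine (MvPolynomial.totalDegree_finset_sum _ _).trans ?_
  refine Finset.sup_le fun i hi => ?_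
  refine (MvPolynomial.totalDegree_smul_le _ _).trans ?_
  refine (MvPolynomial.totalDegree_pow _ _).trans ?_
  exact Nat.mul_le_mul_right _ (Nat.lt_succ_iff.mp (Finset.mem_range.mp hi))

/-- If `f ∈ ℝ[x]` vanishes identically on the complex variety `V_ℂ(I)` of an
ideal `I ⊆ ℝ[x]`, then there is a degree bound `d` such that for every `ε > 0`
there is a polynomial `s_ε ∈ ℝ[x]` with `deg s_ε ≤ d` and
`f + ε - s_ε² ∈ I`. -/
theorem stmt16 (n : ℕ) (I : Ideal (MvPolynomial (Fin n) ℝ)) (f : MvPolynomial (Fin n) ℝ)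
    (hvan : ∀ v : Fin n → ℂ,
      (∀ p ∈ I, eval v (MvPolynomial.map (algebraMap ℝ ℂ) p) = 0) →
      eval v (MvPolynomial.map (algebraMap ℝ ℂ) f) = 0) :
    ∃ d : ℕ, ∀ ε : ℝ, 0 < ε →
      ∃ s : MvPolynomial (Fin n) ℝ,
        s.totalDegree ≤ d ∧ f + MvPolynomial.C ε - s ^ 2 ∈ I := by
  classical
  set φ : MvPolynomial (Fin n) ℝ →+* MvPolynomial (Fin n) ℂ :=
    (MvPolynomial.map (algebraMap ℝ ℂ)) with hφ
  set J : Ideal (MvPolynomial (Fin n) ℂ) := Ideal.map φ I with hJ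
  -- f maps into the radical of J by the Nullstellensatz
  have hrad : φ f ∈ J.radical := by
    rw [← MvPolynomial.vanishingIdeal_zeroLocus_eq_radical (K := ℂ)]
    intro v hv
    exact hvan v fun p hp => hv (φ p) (Ideal.mem_map_of_mem φ hp)
  obtain ⟨k, hk⟩ := hrad
  -- f ^ (k+1) ∈ I
  have hfk : f ^ (k + 1) ∈ I := by
    have hmem : φ (f ^ (k + 1)) ∈ J := by
      rw [map_pow, pow_succ]
      exact J.mul_mem_right _ hk
    have := (rePoly_mem_of_mem_map I _ hmem).1
    rwa [rePoly_map] at this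
  refine ⟨k * f.totalDegree, fun ε hε => ?_⟩
  obtain ⟨p, q, hdeg, hsq⟩ := sqrt_approx k ε hε
  refine ⟨Polynomial.aeval f p, ?_, ?_⟩
  · exact (totalDegree_aeval_le p f).trans (Nat.mul_le_mul_right _ hdeg)
  · have h2 : (Polynomial.aeval f p) ^ 2
        = f + MvPolynomial.C ε + (Polynomial.aeval f q) * f ^ (k + 1) := by
      have := congrArg (Polynomial.aeval f) hsq
      simpa [map_pow, MvPolynomial.algebraMap_eq] using this
    have : f + MvPolynomial.C ε - (Polynomial.aeval f p) ^ 2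
        = (-(Polynomial.aeval f q)) * f ^ (k + 1) := by
      rw [h2]; ring
    rw [this]
    exact I.mul_mem_left _ hfk
end
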